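/- In B_3, the reverse of δ^n τ_1^{u_1} τ_2^{u_2} ⋯ τ_t^{u_t} equals τ_{-t}^{u_t} ⋯ τ_{-1}^{u_1} δ^n, and this is conjugate to a word of the form δ^n τ_1^{v_1} ⋯ τ_t^{v_t} where (v_1,…,v_t) is a cyclic permutation of (u_t,…,u_1). In particular rev preserves n, t, and u_1 + ⋯ + u_t. -/

import Mathlib

def B3rels : Set (FreeGroup (Fin 2)) :=
  {FreeGroup.of 0 * FreeGroup.of 1 * FreeGroup.of 0 *
    (FreeGroup.of 1 * FreeGroup.of 0 * FreeGroup.of 1)⁻¹}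

/-- The braid group on 3 strands, presented as ⟨a, b | aba = bab⟩. -/
abbrev B3 := PresentedGroup B3rels

def a : B3 := PresentedGroup.of 0
def b : B3 := PresentedGroup.of 1
def x : B3 := a⁻¹ * b * a
def δ : B3 := b * a
def Δ : B3 := a * b * a

/-- τ_i = a, b, x according to i ≡ 1, 2, 0 (mod 3). -/
def τ (i : ℤ) : B3 := if i % 3 = 1 then a else if i % 3 = 2 then b else x

lemma braid : a * b * a = b * a * b := by
  have h : (PresentedGroup.mk B3rels) (FreeGroup.of 0 * FreeGroup.of 1 * FreeGroup.of 0 *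
      (FreeGroup.of 1 * FreeGroup.of 0 * FreeGroup.of 1)⁻¹) = 1 := by
    apply (QuotientGroup.eq_one_iff _).2
    exact Subgroup.subset_normalClosure (by simp [B3rels])
  simp only [map_mul, map_inv] at h
  have := mul_inv_eq_one.mp h
  exact this

lemma hx : x = b * a * b⁻¹ := by
  have h1 : a * x = b * a := by rw [x]; group
  have h2 : a * (b * a * b⁻¹) = b * a := by
    calc a * (b * a * b⁻¹) = (a * b * a) * b⁻¹ := by group
      _ = (b * a * b) * b⁻¹ := by rw [braid]
      _ = b * a := by group
  exact mul_left_cancel (h1.trans h2.symm)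

lemma τ_congr {i j : ℤ} (h : i % 3 = j % 3) : τ i = τ j := by
  simp [τ, h]

lemma dτ : ∀ i : ℤ, δ * τ i = τ (i + 2) * δ := by
  intro i
  have h3 : i % 3 = 0 ∨ i % 3 = 1 ∨ i % 3 = 2 := by omega
  rcases h3 with h | h | h
  · have h2 : (i + 2) % 3 = 2 := by omega
    simp only [τ, h, h2]; norm_num
    rw [hx, δ]
    calc b * a * (b * a * b⁻¹) = b * (a * b * a) * b⁻¹ := by group
      _ = b * (b * a * b) * b⁻¹ := by rw [braid]
      _ = b * (b * a) := by group
  · have h2 : (i + 2) % 3 = 0 := by omega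
    simp only [τ, h, h2]; norm_num
    rw [hx, δ]; group
  · have h2 : (i + 2) % 3 = 1 := by omega
    simp only [τ, h, h2]; norm_num
    rw [δ, ← mul_assoc, braid]

lemma dτ' : ∀ i : ℤ, δ⁻¹ * τ i = τ (i - 2) * δ⁻¹ := by
  intro i
  have h := dτ (i - 2)
  rw [show i - 2 + 2 = i by ring] at h
  calc δ⁻¹ * τ i = δ⁻¹ * (τ i * δ) * δ⁻¹ := by group
    _ = δ⁻¹ * (δ * τ (i - 2)) * δ⁻¹ := by rw [h]
    _ = τ (i - 2) * δ⁻¹ := by group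

lemma dpowτ : ∀ (m i : ℤ), δ ^ m * τ i = τ (i + 2 * m) * δ ^ m := by
  intro m
  induction m using Int.induction_on with
  | zero => intro i; simp
  | succ k ih =>
    intro i
    rw [zpow_add_one, mul_assoc, dτ i, ← mul_assoc, ih (i + 2), ← mul_assoc,
      show i + 2 + 2 * (k : ℤ) = i + 2 * ((k : ℤ) + 1) by ring]
  | pred k ih =>
    intro i
    rw [zpow_sub_one, mul_assoc, dτ' i, ← mul_assoc, ih (i - 2), ← mul_assoc,
      show i - 2 + 2 * (-(k : ℤ)) = i + 2 * (-(k : ℤ) - 1) by ring]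

section Rev
variable (rev : B3 → B3) (hrev : ∀ p q : B3, rev (p * q) = rev q * rev p)
include hrev

lemma rev_one : rev 1 = 1 := by
  have h := hrev 1 1
  rw [one_mul] at h
  exact right_eq_mul.mp h

lemma rev_inv (p : B3) : rev p⁻¹ = (rev p)⁻¹ := by
  have h := hrev p p⁻¹
  rw [mul_inv_cancel, rev_one rev hrev] at h
  exact eq_inv_of_mul_eq_one_left h.symm

lemma rev_pow (p : B3) (k : ℕ) : rev (p ^ k) = rev p ^ k := by
  induction k with
  | zero => simpa using rev_one rev hrev
  | succ m ih => rw [pow_succ, hrev, ih, ← pow_succ']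

lemma rev_zpow (p : B3) (k : ℤ) : rev (p ^ k) = rev p ^ k := by
  rcases k with m | m
  · simpa using rev_pow rev hrev p m
  · rw [zpow_negSucc, rev_inv rev hrev, rev_pow rev hrev, zpow_negSucc]

lemma rev_list (L : List B3) : rev L.prod = (L.reverse.map rev).prod := by
  induction L with
  | nil => simpa using rev_one rev hrev
  | cons p L ih =>
    rw [List.prod_cons, hrev, ih, List.reverse_cons, List.map_append,
      List.prod_append]
    simp

variable (ha : rev a = b) (hb : rev b = a)
include ha hb

lemma rev_x : rev x = x := by
  conv_lhs => rw [hx]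
  rw [hrev, hrev, rev_inv rev hrev, ha, hb, x, mul_assoc]

lemma rev_δ : rev δ = δ := by rw [δ, hrev, ha, hb]

lemma rev_τ (i : ℤ) : rev (τ i) = τ (-i) := by
  have h3 : i % 3 = 0 ∨ i % 3 = 1 ∨ i % 3 = 2 := by omega
  rcases h3 with h | h | h
  · have h2 : (-i) % 3 = 0 := by omega
    simp only [τ, h, h2]; norm_num
    exact rev_x rev hrev ha hb
  · have h2 : (-i) % 3 = 2 := by omega
    simp only [τ, h, h2]; norm_num
    exact ha
  · have h2 : (-i) % 3 = 1 := by omega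
    simp only [τ, h, h2]; norm_num
    exact hb

end Rev

lemma dpowτpow (m i : ℤ) (k : ℕ) :
    δ ^ m * τ i ^ k = τ (i + 2 * m) ^ k * δ ^ m := by
  induction k with
  | zero => simp
  | succ j ih =>
    rw [pow_succ, ← mul_assoc, ih, mul_assoc, dpowτ, ← mul_assoc, ← pow_succ]

lemma conj_prod (m : ℤ) (l : List ℕ) (f : ℕ → ℤ) (e : ℕ → ℕ) :
    δ ^ m * (l.map (fun i => τ (f i) ^ e i)).prod =
      (l.map (fun i => τ (f i + 2 * m) ^ e i)).prod * δ ^ m := by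
  induction l with
  | nil => simp
  | cons i l ih =>
    simp only [List.map_cons, List.prod_cons]
    rw [← mul_assoc, dpowτpow, mul_assoc, ih, ← mul_assoc]

/-- The Xu word δ^n τ_1^{u 0} τ_2^{u 1} ⋯ τ_t^{u (t-1)}. -/
def xuWord (n : ℤ) (t : ℕ) (u : ℕ → ℕ) : B3 :=
  δ ^ n * ((List.range t).map (fun (i : ℕ) => τ ((i : ℤ) + 1) ^ u i)).prod

theorem rev_xuWord (rev : B3 → B3)
    (hrev : ∀ p q : B3, rev (p * q) = rev q * rev p)
    (ha : rev a = b) (hb : rev b = a)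
    (n : ℤ) (t : ℕ) (u : ℕ → ℕ) (ht : 1 ≤ t) (hu : ∀ i < t, 1 ≤ u i)
    (h3 : (n + t) % 3 = 0) :
    rev (xuWord n t u) =
      ((List.range t).reverse.map (fun (i : ℕ) => τ (-((i : ℤ) + 1)) ^ u i)).prod * δ ^ n ∧
    ∃ (v : ℕ → ℕ) (k : ℕ),
      (∀ i < t, v i = u (t - 1 - ((i + k) % t))) ∧
      ∃ g : B3, g * rev (xuWord n t u) * g⁻¹ = xuWord n t v := by
  have part1 : rev (xuWord n t u) =
      ((List.range t).reverse.map (fun (i : ℕ) => τ (-((i : ℤ) + 1)) ^ u i)).prod * δ ^ n := by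
    rw [xuWord, hrev, rev_zpow rev hrev, rev_δ rev hrev ha hb, rev_list rev hrev,
      ← List.map_reverse, List.map_map]
    congr 1
    refine congrArg (fun L : List B3 => L.prod) (List.map_congr_left ?_)
    intro i _
    simp only [Function.comp_apply]
    rw [rev_pow rev hrev, rev_τ rev hrev ha hb]
  refine ⟨part1, fun i => u (t - 1 - i), 0, fun i hi => by rw [Nat.add_zero, Nat.mod_eq_of_lt hi], ?_⟩
  refine ⟨δ ^ ((t : ℤ) + 2), ?_⟩
  rw [part1, xuWord]
  rw [conj_prod n (List.range t) (fun j => (j : ℤ) + 1) (fun i => u (t - 1 - i))]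
  rw [← mul_assoc, conj_prod ((t : ℤ) + 2)]
  have hlist : ((List.range t).reverse.map (fun (i : ℕ) => τ (-((i : ℤ) + 1) + 2 * ((t : ℤ) + 2)) ^ u i)) =
      ((List.range t).map (fun (j : ℕ) => τ ((j : ℤ) + 1 + 2 * n) ^ u (t - 1 - j))) := by
    apply List.ext_getElem
    · simp
    · intro j hj hj'
      have hjt : j < t := by simpa using hj'
      simp only [List.getElem_map, List.getElem_reverse, List.getElem_range,
        List.length_map, List.length_reverse, List.length_range]
      congr 1
      apply τ_congr
      have hc : ((t - 1 - j : ℕ) : ℤ) = (t : ℤ) - 1 - j := by omega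
      rw [hc]
      omega
  rw [hlist, mul_assoc, mul_assoc, ← zpow_neg, ← zpow_add, ← zpow_add,
    show (t : ℤ) + 2 + (n + -((t : ℤ) + 2)) = n by ring]
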